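/- (Lemma 2) There exist at least two kinds of optimal arrangements of A: there exists an optimal arrangement c with c_1 = a_1 and c_2 = a_2, and there exists an optimal arrangement c′ with c′_1 = a_1 and c′_n = a_2. -/

import Mathlib

open Finset

/-- Partial sums of the sequence `c` (1-indexed): `partSum c k = c 1 + ⋯ + c k`. -/
noncomputable def partSum (c : ℕ → ℝ) (k : ℕ) : ℝ := ∑ i ∈ Finset.Icc 1 k, c i

/-- The mean `S̄` of the partial sums `s_1, …, s_n`. -/
noncomputable def meanPS (n : ℕ) (c : ℕ → ℝ) : ℝ :=
  (1 / (n : ℝ)) * ∑ k ∈ Finset.Icc 1 n, partSum c k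

/-- The variance `f(c)` of the partial sums `s_1, …, s_n`. -/
noncomputable def varPS (n : ℕ) (c : ℕ → ℝ) : ℝ :=
  (1 / (n : ℝ)) * ∑ k ∈ Finset.Icc 1 n, (partSum c k - meanPS n c) ^ 2

/-- The `(i,j)`-partial mean `μ_{ij}(S) = (1/(j-i)) ∑_{k=i}^{j-1} s_k`. -/
noncomputable def partMean (c : ℕ → ℝ) (i j : ℕ) : ℝ :=
  (1 / ((j : ℝ) - (i : ℝ))) * ∑ k ∈ Finset.Icc i (j - 1), partSum c k

/-- The `(i,j)`-interchange of `c`: swap the entries in positions `i` and `j`. -/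
noncomputable def swapSeq (c : ℕ → ℝ) (i j : ℕ) : ℕ → ℝ := fun k => c (Equiv.swap i j k)

/-- `c` is an arrangement (permutation) of `a` on the index range `1..n`. -/
def IsArrangement (n : ℕ) (a c : ℕ → ℝ) : Prop :=
  ∃ σ : ℕ → ℕ, Set.BijOn σ (Set.Icc 1 n) (Set.Icc 1 n) ∧
    ∀ k ∈ Set.Icc 1 n, c k = a (σ k)

/-- The dual sequence `c^d = (c_1, c_n, c_{n-1}, …, c_2)`. -/
noncomputable def dualSeq (n : ℕ) (c : ℕ → ℝ) : ℕ → ℝ :=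
  fun k => if 2 ≤ k then c (n + 2 - k) else c k


lemma partSum_congr {n : ℕ} {c c' : ℕ → ℝ} (h : ∀ k ∈ Finset.Icc 1 n, c k = c' k)
    {k : ℕ} (hk : k ≤ n) : partSum c k = partSum c' k := by
  unfold partSum
  apply Finset.sum_congr rfl
  intro i hi
  exact h i (Finset.mem_Icc.mpr ⟨(Finset.mem_Icc.mp hi).1, le_trans (Finset.mem_Icc.mp hi).2 hk⟩)

lemma varPS_congr {n : ℕ} {c c' : ℕ → ℝ} (h : ∀ k ∈ Finset.Icc 1 n, c k = c' k) :
    varPS n c = varPS n c' := by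
  have hps : ∀ k ∈ Finset.Icc 1 n, partSum c k = partSum c' k := fun k hk =>
    partSum_congr h (Finset.mem_Icc.mp hk).2
  have hm : meanPS n c = meanPS n c' := by
    unfold meanPS; rw [Finset.sum_congr rfl hps]
  unfold varPS
  rw [hm, Finset.sum_congr rfl (fun k hk => by rw [hps k hk])]

lemma partSum_swap {c : ℕ → ℝ} {i j : ℕ} (h1 : 1 ≤ i) (hij : i < j) (k : ℕ) :
    partSum (swapSeq c i j) k =
      partSum c k + ((if i ≤ k then (c j - c i) else 0) + (if j ≤ k then (c i - c j) else 0)) := by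
  have hne : i ≠ j := hij.ne
  unfold partSum swapSeq
  have hterm : ∀ t, c (Equiv.swap i j t) =
      c t + ((if t = i then c j - c i else 0) + (if t = j then c i - c j else 0)) := by
    intro t
    rcases eq_or_ne t i with rfl | hti
    · simp [Equiv.swap_apply_left, hne]
    · rcases eq_or_ne t j with rfl | htj
      · simp [Equiv.swap_apply_right, hne.symm, hti]
      · rw [Equiv.swap_apply_of_ne_of_ne hti htj]; simp [hti, htj]
  rw [Finset.sum_congr rfl (fun t _ => hterm t), Finset.sum_add_distrib, Finset.sum_add_distrib,
    Finset.sum_ite_eq' (Finset.Icc 1 k) i, Finset.sum_ite_eq' (Finset.Icc 1 k) j]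
  have hmi : (i ∈ Finset.Icc 1 k) ↔ (i ≤ k) := by
    simp [Finset.mem_Icc, h1]
  have hmj : (j ∈ Finset.Icc 1 k) ↔ (j ≤ k) := by
    simp [Finset.mem_Icc, le_trans h1 hij.le]
  simp only [hmi, hmj]

lemma swap_var_diff {n i j : ℕ} (c : ℕ → ℝ) (h1 : 1 ≤ i) (hij : i < j) (hjn : j ≤ n) :
    varPS n (swapSeq c i j) - varPS n c =
      (((j:ℝ) - i)/n) * (2*(c j - c i)*(partMean c i j - meanPS n c)
        + (c j - c i)^2*((n:ℝ) - ((j:ℝ)-i))/n) := by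
  have hn0 : 0 < n := by omega
  have hn' : (n:ℝ) ≠ 0 := Nat.cast_ne_zero.mpr hn0.ne'
  set d : ℝ := c j - c i with hd
  set m : ℝ := ((j:ℝ) - i) with hmdef
  have hmpos : 0 < m := by
    rw [hmdef]; rw [sub_pos]; exact_mod_cast hij
  set B : Finset ℕ := Finset.Icc i (j-1) with hB
  have hBcard : (B.card : ℝ) = m := by
    have h : B.card = j - i := by rw [hB, Nat.card_Icc]; omega
    rw [h, Nat.cast_sub hij.le]
  have hBsub : B ⊆ Finset.Icc 1 n := by
    intro x hx; rw [hB, Finset.mem_Icc] at hx; rw [Finset.mem_Icc]; omega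
  set e : ℕ → ℝ := fun k => if k ∈ B then d else 0 with he
  have hcard : (Finset.Icc 1 n).card = n := by rw [Nat.card_Icc]; omega
  have hps' : ∀ k ∈ Finset.Icc 1 n, partSum (swapSeq c i j) k = partSum c k + e k := by
    intro k hk
    rw [partSum_swap h1 hij k]
    congr 1
    simp only [he, hB, Finset.mem_Icc]
    split_ifs <;> (first | ring1 | (exfalso; omega))
  have hsum_e : ∑ k ∈ Finset.Icc 1 n, e k = m * d := by
    rw [he]
    rw [Finset.sum_ite_mem, Finset.inter_eq_right.mpr hBsub, Finset.sum_const, nsmul_eq_mul,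
      hBcard]
  have hsum_e2 : ∑ k ∈ Finset.Icc 1 n, (e k)^2 = m * d^2 := by
    have h : ∀ k, (e k)^2 = if k ∈ B then d^2 else 0 := by
      intro k; by_cases hkB : k ∈ B <;> simp [he, hkB]
    rw [Finset.sum_congr rfl (fun k _ => h k), Finset.sum_ite_mem,
      Finset.inter_eq_right.mpr hBsub, Finset.sum_const, nsmul_eq_mul, hBcard]
  have hμs : ∑ k ∈ B, partSum c k = m * partMean c i j := by
    unfold partMean
    rw [← hB, ← hmdef]
    field_simp
  have hsum_es : ∑ k ∈ Finset.Icc 1 n, e k * (partSum c k - meanPS n c)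
      = m * d * (partMean c i j - meanPS n c) := by
    have h : ∀ k, e k * (partSum c k - meanPS n c)
        = if k ∈ B then d * (partSum c k - meanPS n c) else 0 := by
      intro k; by_cases hkB : k ∈ B <;> simp [he, hkB]
    rw [Finset.sum_congr rfl (fun k _ => h k), Finset.sum_ite_mem,
      Finset.inter_eq_right.mpr hBsub, ← Finset.mul_sum, Finset.sum_sub_distrib, hμs,
      Finset.sum_const, nsmul_eq_mul, hBcard]
    ring
  have hsum_s : ∑ k ∈ Finset.Icc 1 n, (partSum c k - meanPS n c) = 0 := by
    rw [Finset.sum_sub_distrib, Finset.sum_const, nsmul_eq_mul, hcard]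
    unfold meanPS
    field_simp
    ring
  have hmean' : meanPS n (swapSeq c i j) = meanPS n c + m * d / n := by
    unfold meanPS
    rw [Finset.sum_congr rfl hps', Finset.sum_add_distrib, hsum_e]
    ring
  unfold varPS
  rw [Finset.sum_congr rfl (fun k hk => by rw [hps' k hk, hmean'] :
    ∀ k ∈ Finset.Icc 1 n, (partSum (swapSeq c i j) k - meanPS n (swapSeq c i j))^2
      = (partSum c k + e k - (meanPS n c + m * d / n))^2)]
  have hexp : ∀ k, (partSum c k + e k - (meanPS n c + m * d / n))^2
      = (partSum c k - meanPS n c)^2 + 2*(e k*(partSum c k - meanPS n c))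
        + (-(2*(m*d/n)))*(partSum c k - meanPS n c) + (e k)^2 + (-(2*(m*d/n)))*(e k)
        + (m*d/n)^2 := by
    intro k; ring
  rw [Finset.sum_congr rfl (fun k _ => hexp k)]
  simp only [Finset.sum_add_distrib, ← Finset.mul_sum, Finset.sum_const, nsmul_eq_mul, hcard]
  rw [hsum_e, hsum_e2, hsum_es, hsum_s]
  field_simp
  ring

lemma Icc1_eq_Ioc0 (m : ℕ) : Finset.Icc 1 m = Finset.Ioc 0 m := by
  ext x; simp [Finset.mem_Icc, Finset.mem_Ioc]; omega

lemma arr_pos {n : ℕ} {a c : ℕ → ℝ} (ha1 : 0 < a 1)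
    (ha : ∀ i j, 1 ≤ i → i < j → j ≤ n → a i < a j)
    (harr : IsArrangement n a c) : ∀ k ∈ Finset.Icc 1 n, 0 < c k := by
  obtain ⟨σ, hbij, hval⟩ := harr
  intro k hk
  rw [Finset.mem_Icc] at hk
  have hk' : k ∈ Set.Icc 1 n := Set.mem_Icc.mpr hk
  rw [hval k hk']
  have hσ := hbij.mapsTo hk'
  rw [Set.mem_Icc] at hσ
  rcases eq_or_lt_of_le hσ.1 with h | h
  · rw [← h]; exact ha1
  · exact lt_trans ha1 (ha 1 (σ k) le_rfl h hσ.2)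

lemma arr_injOn {n : ℕ} {a c : ℕ → ℝ}
    (ha : ∀ i j, 1 ≤ i → i < j → j ≤ n → a i < a j)
    (harr : IsArrangement n a c) : Set.InjOn c (Set.Icc 1 n) := by
  obtain ⟨σ, hbij, hval⟩ := harr
  have hax : Set.InjOn a (Set.Icc 1 n) := by
    intro u hu v hv huv
    rw [Set.mem_Icc] at hu hv
    rcases lt_trichotomy u v with h | h | h
    · exact absurd huv (ne_of_lt (ha u v hu.1 h hv.2))
    · exact h
    · exact absurd huv.symm (ne_of_lt (ha v u hv.1 h hu.2))
  intro x hx y hy hxy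
  rw [hval x hx, hval y hy] at hxy
  exact hbij.injOn hx hy (hax (hbij.mapsTo hx) (hbij.mapsTo hy) hxy)

lemma arr_exists_val {n : ℕ} {a c : ℕ → ℝ} (harr : IsArrangement n a c)
    {t : ℕ} (ht : t ∈ Set.Icc 1 n) : ∃ i ∈ Set.Icc 1 n, c i = a t := by
  obtain ⟨σ, hbij, hval⟩ := harr
  obtain ⟨i, hi, hσi⟩ := hbij.surjOn ht
  exact ⟨i, hi, by rw [hval i hi, hσi]⟩

lemma arr_tri {n : ℕ} {a c : ℕ → ℝ}
    (ha : ∀ i j, 1 ≤ i → i < j → j ≤ n → a i < a j)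
    (harr : IsArrangement n a c) :
    ∀ k ∈ Set.Icc 1 n, c k = a 1 ∨ c k = a 2 ∨ a 2 < c k := by
  obtain ⟨σ, hbij, hval⟩ := harr
  intro k hk
  rw [hval k hk]
  have hσ := hbij.mapsTo hk
  rw [Set.mem_Icc] at hσ
  rcases eq_or_lt_of_le hσ.1 with h | h
  · left; rw [← h]
  · rcases eq_or_lt_of_le (show 2 ≤ σ k from h) with h2 | h2
    · right; left; rw [← h2]
    · right; right; exact ha 2 (σ k) (by omega) h2 hσ.2

lemma arr_swap {n : ℕ} {a c : ℕ → ℝ} {i j : ℕ} (hi : i ∈ Set.Icc 1 n) (hj : j ∈ Set.Icc 1 n)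
    (harr : IsArrangement n a c) : IsArrangement n a (swapSeq c i j) := by
  obtain ⟨σ, hbij, hval⟩ := harr
  have hmaps : Set.MapsTo (Equiv.swap i j) (Set.Icc 1 n) (Set.Icc 1 n) := by
    intro x hx
    rcases eq_or_ne x i with rfl | hxi
    · rw [Equiv.swap_apply_left]; exact hj
    · rcases eq_or_ne x j with rfl | hxj
      · rw [Equiv.swap_apply_right]; exact hi
      · rw [Equiv.swap_apply_of_ne_of_ne hxi hxj]; exact hx
  have hbijs : Set.BijOn (Equiv.swap i j) (Set.Icc 1 n) (Set.Icc 1 n) :=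
    ⟨hmaps, (Equiv.injective _).injOn, fun y hy =>
      ⟨Equiv.swap i j y, hmaps hy, Equiv.swap_apply_self i j y⟩⟩
  exact ⟨σ ∘ (Equiv.swap i j), hbij.comp hbijs, fun k hk => by
    simp only [swapSeq, Function.comp_apply]; exact hval _ (hmaps hk)⟩

lemma partSum_strictMonoOn {n : ℕ} {c : ℕ → ℝ} (hpos : ∀ k ∈ Finset.Icc 1 n, 0 < c k)
    {k l : ℕ} (hkl : k < l) (hl : l ≤ n) : partSum c k < partSum c l := by
  unfold partSum
  rw [Icc1_eq_Ioc0, Icc1_eq_Ioc0, ← Finset.sum_Ioc_consecutive c (Nat.zero_le k) hkl.le]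
  have hp : 0 < ∑ i ∈ Finset.Ioc k l, c i := by
    apply Finset.sum_pos
    · intro i hi
      rw [Finset.mem_Ioc] at hi
      exact hpos i (by rw [Finset.mem_Icc]; omega)
    · exact Finset.nonempty_Ioc.mpr hkl
  linarith

lemma partMean_bounds {n : ℕ} {c : ℕ → ℝ} (hpos : ∀ k ∈ Finset.Icc 1 n, 0 < c k)
    {p q : ℕ} (hp : 1 ≤ p) (hpq : p < q) (hq : q ≤ n) :
    partSum c p ≤ partMean c p q ∧ partMean c p q ≤ partSum c (q-1) := by
  have hM : (0:ℝ) < (q:ℝ) - p := by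
    rw [sub_pos]; exact_mod_cast hpq
  have hcard : (((Finset.Icc p (q-1)).card : ℕ) : ℝ) = (q:ℝ) - p := by
    have h : (Finset.Icc p (q-1)).card = q - p := by rw [Nat.card_Icc]; omega
    rw [h, Nat.cast_sub hpq.le]
  have hmono : ∀ x ∈ Finset.Icc p (q-1),
      partSum c p ≤ partSum c x ∧ partSum c x ≤ partSum c (q-1) := by
    intro x hx
    rw [Finset.mem_Icc] at hx
    constructor
    · rcases eq_or_lt_of_le hx.1 with h | h
      · rw [h]
      · exact (partSum_strictMonoOn hpos h (by omega)).le
    · rcases eq_or_lt_of_le hx.2 with h | h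
      · rw [h]
      · exact (partSum_strictMonoOn hpos h (by omega)).le
  have h1 : ((q:ℝ) - p) * partSum c p ≤ ∑ k ∈ Finset.Icc p (q-1), partSum c k := by
    have := Finset.card_nsmul_le_sum (Finset.Icc p (q-1)) (fun k => partSum c k)
      (partSum c p) (fun x hx => (hmono x hx).1)
    rw [nsmul_eq_mul] at this
    rw [← hcard]; exact this
  have h2 : ∑ k ∈ Finset.Icc p (q-1), partSum c k ≤ ((q:ℝ) - p) * partSum c (q-1) := by
    have := Finset.sum_le_card_nsmul (Finset.Icc p (q-1)) (fun k => partSum c k)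
      (partSum c (q-1)) (fun x hx => (hmono x hx).2)
    rw [nsmul_eq_mul] at this
    rw [← hcard]; exact this
  unfold partMean
  constructor
  · rw [show (1 / ((q:ℝ) - p)) * ∑ k ∈ Finset.Icc p (q-1), partSum c k
      = (∑ k ∈ Finset.Icc p (q-1), partSum c k) / ((q:ℝ) - p) by ring,
      le_div_iff₀ hM]
    linarith
  · rw [show (1 / ((q:ℝ) - p)) * ∑ k ∈ Finset.Icc p (q-1), partSum c k
      = (∑ k ∈ Finset.Icc p (q-1), partSum c k) / ((q:ℝ) - p) by ring,
      div_le_iff₀ hM]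
    linarith

lemma partMean_head_lt_mean {n : ℕ} {c : ℕ → ℝ} (hpos : ∀ k ∈ Finset.Icc 1 n, 0 < c k)
    {i : ℕ} (h2 : 2 ≤ i) (hin : i ≤ n) : partMean c 1 i < meanPS n c := by
  set A := ∑ k ∈ Finset.Icc 1 (i-1), partSum c k with hA
  set B := ∑ k ∈ Finset.Icc i n, partSum c k with hB
  have hsplit : ∑ k ∈ Finset.Icc 1 n, partSum c k = A + B := by
    rw [hA, hB, Icc1_eq_Ioc0, Icc1_eq_Ioc0,
      show Finset.Icc i n = Finset.Ioc (i-1) n by ext x; simp [Finset.mem_Icc, Finset.mem_Ioc]; omega,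
      Finset.sum_Ioc_consecutive _ (Nat.zero_le (i-1)) (by omega : i - 1 ≤ n)]
  have hm1 : (0:ℝ) < (i:ℝ) - 1 := by
    have : (2:ℝ) ≤ (i:ℝ) := by exact_mod_cast h2
    linarith
  have hm2 : (0:ℝ) < (n:ℝ) - i + 1 := by
    have : (i:ℝ) ≤ (n:ℝ) := by exact_mod_cast hin
    linarith
  have hn0 : (0:ℝ) < (n:ℝ) := by
    have : (2:ℝ) ≤ (n:ℝ) := by exact_mod_cast le_trans h2 hin
    linarith
  have hcard1 : (((Finset.Icc 1 (i-1)).card : ℕ) : ℝ) = (i:ℝ) - 1 := by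
    have h : (Finset.Icc 1 (i-1)).card = i - 1 := by rw [Nat.card_Icc]; omega
    rw [h, Nat.cast_sub (by omega : 1 ≤ i)]; simp
  have hcard2 : (((Finset.Icc i n).card : ℕ) : ℝ) = (n:ℝ) - i + 1 := by
    have h : (Finset.Icc i n).card = n - i + 1 := by rw [Nat.card_Icc]; omega
    rw [h]; push_cast [Nat.cast_sub hin]; ring
  have hAle : A ≤ ((i:ℝ) - 1) * partSum c (i-1) := by
    have := Finset.sum_le_card_nsmul (Finset.Icc 1 (i-1)) (fun k => partSum c k)
      (partSum c (i-1)) (fun x hx => by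
        rw [Finset.mem_Icc] at hx
        rcases eq_or_lt_of_le hx.2 with h | h
        · rw [h]
        · exact (partSum_strictMonoOn hpos h (by omega)).le)
    rw [nsmul_eq_mul, hcard1] at this
    exact this
  have hBge : ((n:ℝ) - i + 1) * partSum c i ≤ B := by
    have := Finset.card_nsmul_le_sum (Finset.Icc i n) (fun k => partSum c k)
      (partSum c i) (fun x hx => by
        rw [Finset.mem_Icc] at hx
        rcases eq_or_lt_of_le hx.1 with h | h
        · rw [← h]
        · exact (partSum_strictMonoOn hpos h hx.2).le)
    rw [nsmul_eq_mul, hcard2] at this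
    exact this
  have hstep : partSum c (i-1) < partSum c i := partSum_strictMonoOn hpos (by omega) hin
  have key : (n:ℝ) * A < ((i:ℝ) - 1) * (A + B) := by
    have hnid : (n:ℝ) = ((i:ℝ) - 1) + ((n:ℝ) - i + 1) := by ring
    nlinarith [mul_le_mul_of_nonneg_left hAle hm2.le,
      mul_lt_mul_of_pos_left hstep (mul_pos hm1 hm2),
      mul_le_mul_of_nonneg_left hBge hm1.le]
  unfold partMean meanPS
  rw [hsplit, ← hA]
  rw [show ((1:ℕ):ℝ) = (1:ℝ) by simp]
  rw [show (1 / ((i:ℝ) - 1)) * A = A / ((i:ℝ) - 1) by ring,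
    show (1 / (n:ℝ)) * (A + B) = (A + B) / (n:ℝ) by ring,
    div_lt_div_iff₀ hm1 hn0]
  nlinarith [key]

lemma opt_swap_consequence {n : ℕ} {a c : ℕ → ℝ} {i j : ℕ}
    (harr : IsArrangement n a c)
    (hopt : ∀ c'', IsArrangement n a c'' → varPS n c'' ≤ varPS n c)
    (h1 : 1 ≤ i) (hij : i < j) (hjn : j ≤ n) :
    (c j < c i → meanPS n c < partMean c i j) ∧
    (c i < c j → partMean c i j < meanPS n c) := by
  have hn0 : (0:ℝ) < (n:ℝ) := by
    have : (1:ℕ) ≤ n := by omega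
    exact_mod_cast lt_of_lt_of_le Nat.zero_lt_one this
  have harr' : IsArrangement n a (swapSeq c i j) :=
    arr_swap (Set.mem_Icc.mpr ⟨h1, by omega⟩) (Set.mem_Icc.mpr ⟨by omega, hjn⟩) harr
  have hle : varPS n (swapSeq c i j) - varPS n c ≤ 0 := by
    have := hopt _ harr'; linarith
  rw [swap_var_diff c h1 hij hjn] at hle
  set d : ℝ := c j - c i with hd
  set m : ℝ := (j:ℝ) - i with hm
  set X : ℝ := partMean c i j - meanPS n c with hX
  clear_value d m X
  have hmpos : 0 < m := by rw [hm, sub_pos]; exact_mod_cast hij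
  have hmn : m < (n:ℝ) := by
    rw [hm]
    have hji : (j:ℝ) ≤ (n:ℝ) := by exact_mod_cast hjn
    have hi1 : (1:ℝ) ≤ (i:ℝ) := by exact_mod_cast h1
    linarith
  constructor
  · intro hcc
    have hdneg : d < 0 := by rw [hd]; linarith
    rw [← sub_pos, ← hX]
    by_contra hcon
    push_neg at hcon
    have f1 : 0 ≤ 2*d*X := by nlinarith
    have f2 : 0 < d^2 := by nlinarith
    have f3 : 0 < d^2*((n:ℝ)-m)/n := div_pos (mul_pos f2 (by linarith)) hn0
    have f4 : 0 < m/n := div_pos hmpos hn0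
    have : 0 < (m/n) * (2*d*X + d^2*((n:ℝ)-m)/n) := mul_pos f4 (by linarith)
    linarith
  · intro hcc
    have hdpos : 0 < d := by rw [hd]; linarith
    rw [← sub_neg, ← hX]
    by_contra hcon
    push_neg at hcon
    have f1 : 0 ≤ 2*d*X := by nlinarith
    have f2 : 0 < d^2 := by nlinarith
    have f3 : 0 < d^2*((n:ℝ)-m)/n := div_pos (mul_pos f2 (by linarith)) hn0
    have f4 : 0 < m/n := div_pos hmpos hn0
    have : 0 < (m/n) * (2*d*X + d^2*((n:ℝ)-m)/n) := mul_pos f4 (by linarith)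
    linarith

lemma optimal_struct {n : ℕ} {a c : ℕ → ℝ} (hn : 3 < n) (ha1 : 0 < a 1)
    (ha : ∀ i j, 1 ≤ i → i < j → j ≤ n → a i < a j)
    (harr : IsArrangement n a c)
    (hopt : ∀ c'', IsArrangement n a c'' → varPS n c'' ≤ varPS n c) :
    c 1 = a 1 ∧ (c 2 = a 2 ∨ c n = a 2) := by
  have hpos := arr_pos ha1 ha harr
  have hinj := arr_injOn ha harr
  have htri := arr_tri ha harr
  -- first: c 1 = a 1
  have hc1 : c 1 = a 1 := by
    by_contra hne
    obtain ⟨i, hi, hci⟩ := arr_exists_val harr (Set.mem_Icc.mpr ⟨le_refl 1, by omega⟩)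
    rw [Set.mem_Icc] at hi
    have hi1 : i ≠ 1 := by rintro rfl; exact hne hci
    have h2i : 2 ≤ i := by omega
    have hc1gt : a 1 < c 1 := by
      rcases htri 1 (Set.mem_Icc.mpr ⟨le_refl 1, by omega⟩) with h | h | h
      · exact absurd h hne
      · rw [h]; exact ha 1 2 le_rfl one_lt_two (by omega)
      · exact lt_trans (ha 1 2 le_rfl one_lt_two (by omega)) h
    have hswap := (opt_swap_consequence harr hopt le_rfl (by omega : 1 < i) hi.2).1
      (by rw [hci]; exact hc1gt)
    have hhead := partMean_head_lt_mean hpos h2i hi.2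
    linarith
  -- second: a 2 is in position 2 or n
  obtain ⟨i, hi, hci⟩ := arr_exists_val harr (Set.mem_Icc.mpr ⟨one_le_two, by omega⟩)
  rw [Set.mem_Icc] at hi
  have ha12 : a 1 < a 2 := ha 1 2 le_rfl one_lt_two (by omega)
  have hi1 : i ≠ 1 := by
    intro h
    rw [h, hc1] at hci
    exact absurd hci (ne_of_lt ha12)
  refine ⟨hc1, ?_⟩
  by_cases hi2 : i = 2
  · left; rw [hi2] at hci; exact hci
  by_cases hin : i = n
  · right; rw [hin] at hci; exact hci
  -- now 3 ≤ i ≤ n - 1, derive contradiction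
  exfalso
  have h3i : 3 ≤ i := by omega
  have hiltn : i < n := by omega
  have hmem : ∀ k, 1 ≤ k → k ≤ n → k ∈ Set.Icc 1 n := fun k h1 h2 => Set.mem_Icc.mpr ⟨h1, h2⟩
  have hc2gt : a 2 < c 2 := by
    rcases htri 2 (hmem 2 one_le_two (by omega)) with h | h | h
    · exfalso
      have := hinj (hmem 1 le_rfl (by omega)) (hmem 2 one_le_two (by omega))
        (by rw [hc1, h])
      omega
    · exfalso
      have := hinj (hmem 2 one_le_two (by omega)) (hmem i (by omega) hi.2)
        (by rw [h, hci])
      omega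
    · exact h
  have hcngt : a 2 < c n := by
    rcases htri n (hmem n (by omega) le_rfl) with h | h | h
    · exfalso
      have := hinj (hmem 1 le_rfl (by omega)) (hmem n (by omega) le_rfl)
        (by rw [hc1, h])
      omega
    · exfalso
      have := hinj (hmem n (by omega) le_rfl) (hmem i (by omega) hi.2)
        (by rw [h, hci])
      omega
    · exact h
  have hs1 := (opt_swap_consequence harr hopt one_le_two (by omega : 2 < i) hi.2).1
    (by rw [hci]; exact hc2gt)
  have hs2 := (opt_swap_consequence harr hopt (by omega : 1 ≤ i) hiltn le_rfl).2
    (by rw [hci]; exact hcngt)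
  have hb1 := (partMean_bounds hpos one_le_two (by omega : 2 < i) hi.2).2
  have hb2 := (partMean_bounds hpos (by omega : 1 ≤ i) hiltn le_rfl).1
  have hstep : partSum c (i-1) < partSum c i := partSum_strictMonoOn hpos (by omega) hi.2
  linarith

/-- Canonical arrangement associated to a permutation of `Fin n`. -/
noncomputable def permArr (n : ℕ) (a : ℕ → ℝ) (π : Equiv.Perm (Fin n)) : ℕ → ℝ :=
  fun k => if h : 1 ≤ k ∧ k ≤ n then a (((π ⟨k - 1, by omega⟩ : Fin n) : ℕ) + 1) else 0

lemma permArr_isArrangement {n : ℕ} (hn : 0 < n) (a : ℕ → ℝ) (π : Equiv.Perm (Fin n)) :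
    IsArrangement n a (permArr n a π) := by
  refine ⟨fun k => if h : 1 ≤ k ∧ k ≤ n then ((π ⟨k - 1, by omega⟩ : Fin n) : ℕ) + 1 else k,
    ⟨?_, ?_, ?_⟩, ?_⟩
  · intro x hx
    rw [Set.mem_Icc] at hx
    simp only [dif_pos hx]
    rw [Set.mem_Icc]
    have := (π ⟨x - 1, by omega⟩ : Fin n).isLt
    omega
  · intro x hx y hy hxy
    rw [Set.mem_Icc] at hx hy
    simp only [dif_pos hx, dif_pos hy] at hxy
    have h2 : (π ⟨x - 1, by omega⟩ : Fin n) = (π ⟨y - 1, by omega⟩ : Fin n) := by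
      apply Fin.ext; omega
    have h3 := π.injective h2
    have h4 : x - 1 = y - 1 := congrArg Fin.val h3
    omega
  · intro y hy
    rw [Set.mem_Icc] at hy
    refine ⟨((π.symm ⟨y - 1, by omega⟩ : Fin n) : ℕ) + 1, ?_, ?_⟩
    · rw [Set.mem_Icc]
      have := (π.symm ⟨y - 1, by omega⟩ : Fin n).isLt
      omega
    · have hmem : 1 ≤ ((π.symm ⟨y - 1, by omega⟩ : Fin n) : ℕ) + 1 ∧
        ((π.symm ⟨y - 1, by omega⟩ : Fin n) : ℕ) + 1 ≤ n := by
        have := (π.symm ⟨y - 1, by omega⟩ : Fin n).isLt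
        omega
      simp only [dif_pos hmem, Nat.add_sub_cancel, Fin.eta, Equiv.apply_symm_apply, Fin.val_mk]
      omega
  · intro k hk
    rw [Set.mem_Icc] at hk
    simp only [permArr, dif_pos hk]

lemma arrangement_eq_permArr {n : ℕ} (hn : 0 < n) {a c : ℕ → ℝ} (harr : IsArrangement n a c) :
    ∃ π : Equiv.Perm (Fin n), ∀ k ∈ Finset.Icc 1 n, c k = permArr n a π k := by
  obtain ⟨σ, hbij, hval⟩ := harr
  have hσmem : ∀ x : Fin n, σ ((x : ℕ) + 1) ∈ Set.Icc 1 n := by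
    intro x
    exact hbij.mapsTo (Set.mem_Icc.mpr ⟨by omega, by have := x.isLt; omega⟩)
  set π0 : Fin n → Fin n := fun x => ⟨σ ((x : ℕ) + 1) - 1, by
    have := Set.mem_Icc.mp (hσmem x); omega⟩ with hπ0
  have hinj : Function.Injective π0 := by
    intro x y hxy
    have h1 := Set.mem_Icc.mp (hσmem x)
    have h2 := Set.mem_Icc.mp (hσmem y)
    have h3 : σ ((x : ℕ) + 1) - 1 = σ ((y : ℕ) + 1) - 1 := congrArg Fin.val hxy
    have h4 : σ ((x : ℕ) + 1) = σ ((y : ℕ) + 1) := by omega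
    have h5 := hbij.injOn (Set.mem_Icc.mpr ⟨by omega, by have := x.isLt; omega⟩)
      (Set.mem_Icc.mpr ⟨by omega, by have := y.isLt; omega⟩) h4
    apply Fin.ext; omega
  have hbij0 : Function.Bijective π0 := Finite.injective_iff_bijective.mp hinj
  refine ⟨Equiv.ofBijective π0 hbij0, ?_⟩
  intro k hk
  rw [Finset.mem_Icc] at hk
  have hkmem : 1 ≤ k ∧ k ≤ n := hk
  rw [hval k (Set.mem_Icc.mpr hk)]
  simp only [permArr, dif_pos hkmem]
  have hcoe : (Equiv.ofBijective π0 hbij0) ⟨k - 1, by omega⟩ = π0 ⟨k - 1, by omega⟩ := rfl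
  rw [hcoe, hπ0]
  simp only []
  have harg : (k - 1) + 1 = k := by omega
  have hmem := Set.mem_Icc.mp (hσmem ⟨k - 1, by omega⟩)
  simp only [harg] at hmem ⊢
  congr 1
  omega

lemma exists_optimal {n : ℕ} (hn : 0 < n) (a : ℕ → ℝ) :
    ∃ c, IsArrangement n a c ∧ ∀ c'', IsArrangement n a c'' → varPS n c'' ≤ varPS n c := by
  have hne : (Finset.univ.image (fun π : Equiv.Perm (Fin n) => varPS n (permArr n a π))).Nonempty :=
    ⟨varPS n (permArr n a 1), Finset.mem_image.mpr ⟨1, Finset.mem_univ _, rfl⟩⟩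
  obtain ⟨π₀, _, hmax⟩ := Finset.mem_image.mp (Finset.max'_mem _ hne)
  refine ⟨permArr n a π₀, permArr_isArrangement hn a π₀, ?_⟩
  intro c'' harr''
  obtain ⟨π, hπ⟩ := arrangement_eq_permArr hn harr''
  rw [varPS_congr hπ, hmax]
  exact Finset.le_max'
    (Finset.univ.image (fun π : Equiv.Perm (Fin n) => varPS n (permArr n a π))) _
    (Finset.mem_image.mpr ⟨π, Finset.mem_univ _, rfl⟩)

lemma dual_isArrangement {n : ℕ} (hn : 1 ≤ n) {a c : ℕ → ℝ} (harr : IsArrangement n a c) :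
    IsArrangement n a (dualSeq n c) := by
  obtain ⟨σ, hbij, hval⟩ := harr
  set r : ℕ → ℕ := fun k => if 2 ≤ k then n + 2 - k else k with hr
  have hmaps : Set.MapsTo r (Set.Icc 1 n) (Set.Icc 1 n) := by
    intro x hx
    rw [Set.mem_Icc] at hx
    rw [Set.mem_Icc, hr]
    dsimp only
    split_ifs <;> omega
  have hinv : ∀ x ∈ Set.Icc 1 n, r (r x) = x := by
    intro x hx
    rw [Set.mem_Icc] at hx
    rw [hr]
    dsimp only
    split_ifs <;> omega
  have hbijr : Set.BijOn r (Set.Icc 1 n) (Set.Icc 1 n) := by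
    refine ⟨hmaps, ?_, ?_⟩
    · intro x hx y hy hxy
      rw [← hinv x hx, ← hinv y hy, hxy]
    · intro y hy
      exact ⟨r y, hmaps hy, hinv y hy⟩
  refine ⟨σ ∘ r, hbij.comp hbijr, ?_⟩
  intro k hk
  have hrk := hmaps hk
  rw [Set.mem_Icc] at hk
  simp only [Function.comp_apply]
  rw [← hval _ hrk]
  simp only [dualSeq, hr]
  split_ifs <;> rfl

lemma dual_partSum {n : ℕ} (c : ℕ → ℝ) {k : ℕ} (hk : 1 ≤ k) (hkn : k ≤ n) :
    partSum (dualSeq n c) k = partSum c 1 + partSum c n - partSum c (n + 1 - k) := by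
  have hps1 : partSum c 1 = c 1 := by unfold partSum; simp
  unfold partSum
  rw [Icc1_eq_Ioc0, ← Finset.sum_Ioc_consecutive (dualSeq n c) (Nat.zero_le 1) hk]
  have h1 : ∑ i ∈ Finset.Ioc 0 1, dualSeq n c i = c 1 := by
    simp [dualSeq]
  rw [h1]
  have h2 : ∑ i ∈ Finset.Ioc 1 k, dualSeq n c i = ∑ i ∈ Finset.Ioc (n + 1 - k) n, c i := by
    refine Finset.sum_nbij' (fun t => n + 2 - t) (fun t => n + 2 - t) ?_ ?_ ?_ ?_ ?_
    · intro t ht; rw [Finset.mem_Ioc] at ht ⊢; omega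
    · intro t ht; rw [Finset.mem_Ioc] at ht ⊢; omega
    · intro t ht; rw [Finset.mem_Ioc] at ht; omega
    · intro t ht; rw [Finset.mem_Ioc] at ht; omega
    · intro t ht; rw [Finset.mem_Ioc] at ht
      simp only [dualSeq]
      rw [if_pos (by omega : 2 ≤ t)]
  rw [h2]
  have h3 : ∑ i ∈ Finset.Icc 1 (n + 1 - k), c i + ∑ i ∈ Finset.Ioc (n + 1 - k) n, c i
      = ∑ i ∈ Finset.Icc 1 n, c i := by
    rw [Icc1_eq_Ioc0, Icc1_eq_Ioc0]
    exact Finset.sum_Ioc_consecutive c (Nat.zero_le _) (by omega)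
  have : partSum c 1 = c 1 := hps1
  unfold partSum at *
  linarith [h3]

lemma dual_varPS {n : ℕ} (hn : 1 ≤ n) (c : ℕ → ℝ) : varPS n (dualSeq n c) = varPS n c := by
  have hn' : (n:ℝ) ≠ 0 := Nat.cast_ne_zero.mpr (by omega)
  have hrefl : ∀ g : ℕ → ℝ, ∑ k ∈ Finset.Icc 1 n, g (n + 1 - k) = ∑ k ∈ Finset.Icc 1 n, g k := by
    intro g
    refine Finset.sum_nbij' (fun t => n + 1 - t) (fun t => n + 1 - t) ?_ ?_ ?_ ?_ ?_
    · intro t ht; rw [Finset.mem_Icc] at ht ⊢; omega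
    · intro t ht; rw [Finset.mem_Icc] at ht ⊢; omega
    · intro t ht; rw [Finset.mem_Icc] at ht; omega
    · intro t ht; rw [Finset.mem_Icc] at ht; omega
    · intro t ht; rfl
  have hps : ∀ k ∈ Finset.Icc 1 n, partSum (dualSeq n c) k
      = partSum c 1 + partSum c n - partSum c (n + 1 - k) := by
    intro k hk
    rw [Finset.mem_Icc] at hk
    exact dual_partSum c hk.1 hk.2
  have hcard : ((Finset.Icc 1 n).card : ℝ) = n := by
    rw [Nat.card_Icc]; simp
  have hmean : meanPS n (dualSeq n c) = partSum c 1 + partSum c n - meanPS n c := by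
    unfold meanPS
    rw [Finset.sum_congr rfl hps, Finset.sum_sub_distrib, Finset.sum_const, nsmul_eq_mul, hcard,
      hrefl (fun k => partSum c k)]
    field_simp
  unfold varPS
  rw [Finset.sum_congr rfl (fun k hk => by
    rw [hps k hk, hmean] :
    ∀ k ∈ Finset.Icc 1 n, (partSum (dualSeq n c) k - meanPS n (dualSeq n c))^2
      = ((partSum c 1 + partSum c n - partSum c (n + 1 - k))
          - (partSum c 1 + partSum c n - meanPS n c))^2)]
  have hsq : ∀ k, ((partSum c 1 + partSum c n - partSum c (n + 1 - k))
      - (partSum c 1 + partSum c n - meanPS n c))^2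
      = (partSum c (n + 1 - k) - meanPS n c)^2 := by
    intro k; ring
  rw [Finset.sum_congr rfl (fun k _ => hsq k),
    hrefl (fun k => (partSum c k - meanPS n c)^2)]

/-- Lemma 2: there exist optimal arrangements of both kinds. -/
theorem exists_two_kinds_of_optimal (n : ℕ) (hn : 3 < n) (a : ℕ → ℝ)
    (ha1 : 0 < a 1) (ha : ∀ i j, 1 ≤ i → i < j → j ≤ n → a i < a j) :
    (∃ c : ℕ → ℝ, IsArrangement n a c ∧
      (∀ c'', IsArrangement n a c'' → varPS n c'' ≤ varPS n c) ∧
      c 1 = a 1 ∧ c 2 = a 2) ∧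
    (∃ c' : ℕ → ℝ, IsArrangement n a c' ∧
      (∀ c'', IsArrangement n a c'' → varPS n c'' ≤ varPS n c') ∧
      c' 1 = a 1 ∧ c' n = a 2) := by
  obtain ⟨c, harr, hopt⟩ := exists_optimal (by omega : 0 < n) a
  obtain ⟨hc1, hc2⟩ := optimal_struct hn ha1 ha harr hopt
  have hdarr : IsArrangement n a (dualSeq n c) := dual_isArrangement (by omega) harr
  have hdopt : ∀ c'', IsArrangement n a c'' → varPS n c'' ≤ varPS n (dualSeq n c) := by
    intro c'' h
    rw [dual_varPS (by omega) c]
    exact hopt c'' h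
  have hd1 : dualSeq n c 1 = c 1 := by simp [dualSeq]
  have hdn : dualSeq n c n = c 2 := by
    simp only [dualSeq, if_pos (by omega : 2 ≤ n)]
    congr 1
    omega
  have hd2 : dualSeq n c 2 = c n := by
    simp [dualSeq]
  rcases hc2 with h | h
  · exact ⟨⟨c, harr, hopt, hc1, h⟩,
      ⟨dualSeq n c, hdarr, hdopt, by rw [hd1, hc1], by rw [hdn, h]⟩⟩
  · exact ⟨⟨dualSeq n c, hdarr, hdopt, by rw [hd1, hc1], by rw [hd2, h]⟩,
      ⟨c, harr, hopt, hc1, h⟩⟩
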